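/- Let U ⊆ ℝ⁴ be open, let Φ : U → ℝ and H, v : U → ℝ³ be twice continuously differentiable, and assume ∂₁Φ ≠ 0 on U. If the induction equation ℍ(H, v, Φ) := (∂ₜ^Φ + v · ∇^Φ)H − (H · ∇^Φ)v + H(∇^Φ · v) = 0 holds on U, then (∂ₜ^Φ + v · ∇^Φ)(∇^Φ · H) + (∇^Φ · v)(∇^Φ · H) = 0 on U. -/

import Mathlib

/-- Partial derivative `∂ᵢ f` on `ℝ⁴` (coordinates `(t, x₁, x₂, x₃)` indexed by `Fin 4`,
with `∂₀ = ∂ₜ`). -/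
noncomputable def pd (i : Fin 4) (f : (Fin 4 → ℝ) → ℝ) (x : Fin 4 → ℝ) : ℝ :=
  fderiv ℝ f x (Pi.single i 1)

/-- Transformed derivative `∂ᵢ^Φ`: `∂ₜ^Φ f = ∂ₜf − (∂ₜΦ/∂₁Φ)∂₁f`,
`∂₁^Φ f = ∂₁f/∂₁Φ`, and `∂ⱼ^Φ f = ∂ⱼf − (∂ⱼΦ/∂₁Φ)∂₁f` for `j = 2, 3`. -/
noncomputable def pdPhi (Φ : (Fin 4 → ℝ) → ℝ) (i : Fin 4) (f : (Fin 4 → ℝ) → ℝ)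
    (x : Fin 4 → ℝ) : ℝ :=
  if i = 1 then pd 1 f x / pd 1 Φ x else pd i f x - pd i Φ x / pd 1 Φ x * pd 1 f x

/-- Transformed divergence `∇^Φ · u = ∂₁^Φu₁ + ∂₂^Φu₂ + ∂₃^Φu₃`. -/
noncomputable def divPhi (Φ : (Fin 4 → ℝ) → ℝ) (u : (Fin 4 → ℝ) → Fin 3 → ℝ)
    (x : Fin 4 → ℝ) : ℝ :=
  pdPhi Φ 1 (fun y => u y 0) x + pdPhi Φ 2 (fun y => u y 1) x + pdPhi Φ 3 (fun y => u y 2) x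

namespace Stmt12Aux

variable {f g Φ : (Fin 4 → ℝ) → ℝ} {x : Fin 4 → ℝ}

lemma pd_add (k : Fin 4) (hf : DifferentiableAt ℝ f x) (hg : DifferentiableAt ℝ g x) :
    pd k (fun y => f y + g y) x = pd k f x + pd k g x := by
  unfold pd; rw [fderiv_fun_add hf hg]; simp

lemma pd_sub (k : Fin 4) (hf : DifferentiableAt ℝ f x) (hg : DifferentiableAt ℝ g x) :
    pd k (fun y => f y - g y) x = pd k f x - pd k g x := by
  unfold pd; rw [fderiv_fun_sub hf hg]; simp

lemma pd_mul (k : Fin 4) (hf : DifferentiableAt ℝ f x) (hg : DifferentiableAt ℝ g x) :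
    pd k (fun y => f y * g y) x = pd k f x * g x + f x * pd k g x := by
  unfold pd; rw [fderiv_fun_mul hf hg]; simp; ring

lemma pd_inv (k : Fin 4) (hg : DifferentiableAt ℝ g x) (hgx : g x ≠ 0) :
    pd k (fun y => (g y)⁻¹) x = -(g x ^ 2)⁻¹ * pd k g x := by
  have h := ((hasDerivAt_inv hgx).comp_hasFDerivAt x hg.hasFDerivAt).fderiv
  unfold pd
  rw [show (fun y => (g y)⁻¹) = (fun t : ℝ => t⁻¹) ∘ g from rfl, h]
  simp

lemma diffAt_div (hf : DifferentiableAt ℝ f x) (hg : DifferentiableAt ℝ g x) (hgx : g x ≠ 0) :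
    DifferentiableAt ℝ (fun y => f y / g y) x := by
  simp only [div_eq_mul_inv]; exact hf.mul (hg.inv hgx)

lemma pd_div (k : Fin 4) (hf : DifferentiableAt ℝ f x) (hg : DifferentiableAt ℝ g x)
    (hgx : g x ≠ 0) :
    pd k (fun y => f y / g y) x = pd k f x / g x - f x * pd k g x / g x ^ 2 := by
  simp only [div_eq_mul_inv]
  rw [pd_mul k hf (hg.fun_inv hgx), pd_inv k hg hgx]
  ring

lemma diff_pd (hf : ContDiffAt ℝ 2 f x) (j : Fin 4) :
    DifferentiableAt ℝ (fun y => pd j f y) x := by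
  have hdf : DifferentiableAt ℝ (fderiv ℝ f) x :=
    (hf.fderiv_right (m := 1) (by norm_num)).differentiableAt (by norm_num)
  exact hdf.clm_apply (differentiableAt_const _)

lemma pd_pd (hf : ContDiffAt ℝ 2 f x) (k j : Fin 4) :
    pd k (fun y => pd j f y) x
      = fderiv ℝ (fderiv ℝ f) x (Pi.single k 1) (Pi.single j 1) := by
  have hdf : DifferentiableAt ℝ (fderiv ℝ f) x :=
    (hf.fderiv_right (m := 1) (by norm_num)).differentiableAt (by norm_num)
  unfold pd
  rw [fderiv_clm_apply hdf (differentiableAt_const (Pi.single j (1:ℝ)))]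
  simp

lemma pd_comm (hf : ContDiffAt ℝ 2 f x) (k j : Fin 4) :
    pd k (fun y => pd j f y) x = pd j (fun y => pd k f y) x := by
  rw [pd_pd hf, pd_pd hf]
  exact (hf.isSymmSndFDerivAt (by simp)) _ _

end Stmt12Aux

namespace Stmt12Aux

variable {f g Φ : (Fin 4 → ℝ) → ℝ} {x : Fin 4 → ℝ}

lemma diff_pdPhi (hΦ : ContDiffAt ℝ 2 Φ x) (hf : ContDiffAt ℝ 2 f x)
    (h1 : pd 1 Φ x ≠ 0) (k : Fin 4) :
    DifferentiableAt ℝ (fun y => pdPhi Φ k f y) x := by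
  by_cases hk : k = 1
  · subst hk
    simp only [pdPhi, if_pos rfl]
    exact diffAt_div (diff_pd hf 1) (diff_pd hΦ 1) h1
  · simp only [pdPhi, if_neg hk]
    exact (diff_pd hf k).sub
      ((diffAt_div (diff_pd hΦ k) (diff_pd hΦ 1) h1).mul (diff_pd hf 1))

lemma pdPhi_add (k : Fin 4) (hf : DifferentiableAt ℝ f x) (hg : DifferentiableAt ℝ g x) :
    pdPhi Φ k (fun y => f y + g y) x = pdPhi Φ k f x + pdPhi Φ k g x := by
  by_cases hk : k = 1 <;>
    simp only [pdPhi, if_pos, if_neg, hk, reduceIte] <;>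
    rw [pd_add _ hf hg] <;> [skip; rw [pd_add _ hf hg]] <;> ring

lemma pdPhi_sub (k : Fin 4) (hf : DifferentiableAt ℝ f x) (hg : DifferentiableAt ℝ g x) :
    pdPhi Φ k (fun y => f y - g y) x = pdPhi Φ k f x - pdPhi Φ k g x := by
  by_cases hk : k = 1 <;>
    simp only [pdPhi, if_pos, if_neg, hk, reduceIte] <;>
    rw [pd_sub _ hf hg] <;> [skip; rw [pd_sub _ hf hg]] <;> ring

lemma pdPhi_mul (k : Fin 4) (hf : DifferentiableAt ℝ f x) (hg : DifferentiableAt ℝ g x) :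
    pdPhi Φ k (fun y => f y * g y) x = pdPhi Φ k f x * g x + f x * pdPhi Φ k g x := by
  by_cases hk : k = 1 <;>
    simp only [pdPhi, if_pos, if_neg, hk, reduceIte] <;>
    rw [pd_mul _ hf hg] <;> [skip; rw [pd_mul _ hf hg]] <;> ring

lemma pd_pdPhi (hΦ : ContDiffAt ℝ 2 Φ x) (hf : ContDiffAt ℝ 2 f x)
    (h1 : pd 1 Φ x ≠ 0) (k j : Fin 4) :
    pd k (fun y => pdPhi Φ j f y) x =
      if j = 1 then
        pd k (fun y => pd 1 f y) x / pd 1 Φ x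
          - pd 1 f x * pd k (fun y => pd 1 Φ y) x / pd 1 Φ x ^ 2
      else
        pd k (fun y => pd j f y) x
          - (pd k (fun y => pd j Φ y) x / pd 1 Φ x
              - pd j Φ x * pd k (fun y => pd 1 Φ y) x / pd 1 Φ x ^ 2) * pd 1 f x
          - pd j Φ x / pd 1 Φ x * pd k (fun y => pd 1 f y) x := by
  by_cases hj : j = 1
  · subst hj
    simp only [pdPhi, if_pos rfl, reduceIte]
    rw [pd_div k (diff_pd hf 1) (diff_pd hΦ 1) h1]
  · simp only [pdPhi, if_neg hj]
    rw [pd_sub k (diff_pd hf j)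
        ((diffAt_div (diff_pd hΦ j) (diff_pd hΦ 1) h1).fun_mul (diff_pd hf 1)),
      pd_mul k (diffAt_div (diff_pd hΦ j) (diff_pd hΦ 1) h1) (diff_pd hf 1),
      pd_div k (diff_pd hΦ j) (diff_pd hΦ 1) h1]
    ring

end Stmt12Aux

namespace Stmt12Aux

variable {f g Φ : (Fin 4 → ℝ) → ℝ} {x : Fin 4 → ℝ}

lemma pdPhi_comm (hΦ : ContDiffAt ℝ 2 Φ x) (hf : ContDiffAt ℝ 2 f x)
    (h1 : pd 1 Φ x ≠ 0) (a b : Fin 4) :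
    pdPhi Φ a (fun y => pdPhi Φ b f y) x = pdPhi Φ b (fun y => pdPhi Φ a f y) x := by
  have ea : ∀ (g : (Fin 4 → ℝ) → ℝ) (k : Fin 4), pdPhi Φ k g x =
      if k = 1 then pd 1 g x / pd 1 Φ x
      else pd k g x - pd k Φ x / pd 1 Φ x * pd 1 g x := fun g k => rfl
  by_cases ha : a = 1 <;> by_cases hb : b = 1
  · subst ha; subst hb; rfl
  · subst ha
    rw [ea _ 1, ea _ b]
    simp only [pd_pdPhi hΦ hf h1, if_pos rfl, if_neg hb, reduceIte]
    rw [pd_comm hf 1 b, pd_comm hΦ 1 b]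
    field_simp
    ring
  · subst hb
    rw [ea _ a, ea _ 1]
    simp only [pd_pdPhi hΦ hf h1, if_pos rfl, if_neg ha, reduceIte]
    rw [pd_comm hf 1 a, pd_comm hΦ 1 a]
    field_simp
    ring
  · rw [ea _ a, ea _ b]
    simp only [pd_pdPhi hΦ hf h1, if_neg ha, if_neg hb, reduceIte]
    rw [pd_comm hf b a, pd_comm hΦ b a, pd_comm hf 1 b, pd_comm hΦ 1 b,
      pd_comm hf 1 a, pd_comm hΦ 1 a]
    field_simp
    ring

end Stmt12Aux

namespace Stmt12Aux

variable {f g Φ : (Fin 4 → ℝ) → ℝ} {x : Fin 4 → ℝ}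

lemma pdPhi_eventually_zero (h : f =ᶠ[nhds x] fun _ => (0:ℝ)) (m : Fin 4) :
    pdPhi Φ m f x = 0 := by
  have hpd : ∀ k : Fin 4, pd k f x = 0 := by
    intro k; unfold pd; rw [h.fderiv_eq]; simp
  by_cases hm : m = 1 <;> simp [pdPhi, hm, hpd]

lemma pdPhi_divPhi (hΦ : ContDiffAt ℝ 2 Φ x) {u : (Fin 4 → ℝ) → Fin 3 → ℝ}
    (hu : ∀ c, ContDiffAt ℝ 2 (fun z => u z c) x) (h1 : pd 1 Φ x ≠ 0) (m : Fin 4) :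
    pdPhi Φ m (fun y => divPhi Φ u y) x
      = pdPhi Φ m (fun y => pdPhi Φ 1 (fun z => u z 0) y) x
        + pdPhi Φ m (fun y => pdPhi Φ 2 (fun z => u z 1) y) x
        + pdPhi Φ m (fun y => pdPhi Φ 3 (fun z => u z 2) y) x := by
  have e : (fun y => divPhi Φ u y)
      = fun y => (pdPhi Φ 1 (fun z => u z 0) y + pdPhi Φ 2 (fun z => u z 1) y)
          + pdPhi Φ 3 (fun z => u z 2) y := rfl
  rw [e, pdPhi_add m ((diff_pdPhi hΦ (hu 0) h1 1).fun_add (diff_pdPhi hΦ (hu 1) h1 2))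
      (diff_pdPhi hΦ (hu 2) h1 3),
    pdPhi_add m (diff_pdPhi hΦ (hu 0) h1 1) (diff_pdPhi hΦ (hu 1) h1 2)]

lemma pdPhi_divPhi' (hΦ : ContDiffAt ℝ 2 Φ x) {u : (Fin 4 → ℝ) → Fin 3 → ℝ}
    (hu : ∀ c, ContDiffAt ℝ 2 (fun z => u z c) x) (h1 : pd 1 Φ x ≠ 0) (m : Fin 4) :
    pdPhi Φ m (divPhi Φ u) x
      = pdPhi Φ m (fun y => pdPhi Φ 1 (fun z => u z 0) y) x
        + pdPhi Φ m (fun y => pdPhi Φ 2 (fun z => u z 1) y) x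
        + pdPhi Φ m (fun y => pdPhi Φ 3 (fun z => u z 2) y) x := by
  exact pdPhi_divPhi hΦ hu h1 m

lemma master (hΦ : ContDiffAt ℝ 2 Φ x) {Hf vf : (Fin 4 → ℝ) → Fin 3 → ℝ}
    (hH : ∀ c, ContDiffAt ℝ 2 (fun z => Hf z c) x)
    (hv : ∀ c, ContDiffAt ℝ 2 (fun z => vf z c) x)
    (h1 : pd 1 Φ x ≠ 0) (m : Fin 4) (i : Fin 3) :
    pdPhi Φ m (fun y =>
      pdPhi Φ 0 (fun z => Hf z i) y
        + (vf y 0 * pdPhi Φ 1 (fun z => Hf z i) y + vf y 1 * pdPhi Φ 2 (fun z => Hf z i) y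
            + vf y 2 * pdPhi Φ 3 (fun z => Hf z i) y)
        - (Hf y 0 * pdPhi Φ 1 (fun z => vf z i) y + Hf y 1 * pdPhi Φ 2 (fun z => vf z i) y
            + Hf y 2 * pdPhi Φ 3 (fun z => vf z i) y)
        + Hf y i * divPhi Φ vf y) x
    = pdPhi Φ m (fun y => pdPhi Φ 0 (fun z => Hf z i) y) x
      + (pdPhi Φ m (fun z => vf z 0) x * pdPhi Φ 1 (fun z => Hf z i) x
        + vf x 0 * pdPhi Φ m (fun y => pdPhi Φ 1 (fun z => Hf z i) y) x
        + pdPhi Φ m (fun z => vf z 1) x * pdPhi Φ 2 (fun z => Hf z i) x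
        + vf x 1 * pdPhi Φ m (fun y => pdPhi Φ 2 (fun z => Hf z i) y) x
        + pdPhi Φ m (fun z => vf z 2) x * pdPhi Φ 3 (fun z => Hf z i) x
        + vf x 2 * pdPhi Φ m (fun y => pdPhi Φ 3 (fun z => Hf z i) y) x)
      - (pdPhi Φ m (fun z => Hf z 0) x * pdPhi Φ 1 (fun z => vf z i) x
        + Hf x 0 * pdPhi Φ m (fun y => pdPhi Φ 1 (fun z => vf z i) y) x
        + pdPhi Φ m (fun z => Hf z 1) x * pdPhi Φ 2 (fun z => vf z i) x
        + Hf x 1 * pdPhi Φ m (fun y => pdPhi Φ 2 (fun z => vf z i) y) x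
        + pdPhi Φ m (fun z => Hf z 2) x * pdPhi Φ 3 (fun z => vf z i) x
        + Hf x 2 * pdPhi Φ m (fun y => pdPhi Φ 3 (fun z => vf z i) y) x)
      + (pdPhi Φ m (fun z => Hf z i) x
          * (pdPhi Φ 1 (fun z => vf z 0) x + pdPhi Φ 2 (fun z => vf z 1) x
              + pdPhi Φ 3 (fun z => vf z 2) x)
        + Hf x i * (pdPhi Φ m (fun y => pdPhi Φ 1 (fun z => vf z 0) y) x
          + pdPhi Φ m (fun y => pdPhi Φ 2 (fun z => vf z 1) y) x
          + pdPhi Φ m (fun y => pdPhi Φ 3 (fun z => vf z 2) y) x)) := by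
  have dHc : ∀ c, DifferentiableAt ℝ (fun z => Hf z c) x :=
    fun c => (hH c).differentiableAt (by norm_num)
  have dvc : ∀ c, DifferentiableAt ℝ (fun z => vf z c) x :=
    fun c => (hv c).differentiableAt (by norm_num)
  have dP : ∀ (k : Fin 4) (c : Fin 3),
      DifferentiableAt ℝ (fun y => pdPhi Φ k (fun z => Hf z c) y) x :=
    fun k c => diff_pdPhi hΦ (hH c) h1 k
  have dQ : ∀ (k : Fin 4) (c : Fin 3),
      DifferentiableAt ℝ (fun y => pdPhi Φ k (fun z => vf z c) y) x :=
    fun k c => diff_pdPhi hΦ (hv c) h1 k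
  have ddiv : DifferentiableAt ℝ (fun y => divPhi Φ vf y) x := by
    exact ((dQ 1 0).add (dQ 2 1)).add (dQ 3 2)
  have dB1 : DifferentiableAt ℝ (fun y => vf y 0 * pdPhi Φ 1 (fun z => Hf z i) y) x :=
    (dvc 0).mul (dP 1 i)
  have dB2 : DifferentiableAt ℝ (fun y => vf y 1 * pdPhi Φ 2 (fun z => Hf z i) y) x :=
    (dvc 1).mul (dP 2 i)
  have dB3 : DifferentiableAt ℝ (fun y => vf y 2 * pdPhi Φ 3 (fun z => Hf z i) y) x :=
    (dvc 2).mul (dP 3 i)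
  have dC1 : DifferentiableAt ℝ (fun y => Hf y 0 * pdPhi Φ 1 (fun z => vf z i) y) x :=
    (dHc 0).mul (dQ 1 i)
  have dC2 : DifferentiableAt ℝ (fun y => Hf y 1 * pdPhi Φ 2 (fun z => vf z i) y) x :=
    (dHc 1).mul (dQ 2 i)
  have dC3 : DifferentiableAt ℝ (fun y => Hf y 2 * pdPhi Φ 3 (fun z => vf z i) y) x :=
    (dHc 2).mul (dQ 3 i)
  have dB : DifferentiableAt ℝ (fun y => vf y 0 * pdPhi Φ 1 (fun z => Hf z i) y
      + vf y 1 * pdPhi Φ 2 (fun z => Hf z i) y + vf y 2 * pdPhi Φ 3 (fun z => Hf z i) y) x :=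
    (dB1.add dB2).add dB3
  have dC : DifferentiableAt ℝ (fun y => Hf y 0 * pdPhi Φ 1 (fun z => vf z i) y
      + Hf y 1 * pdPhi Φ 2 (fun z => vf z i) y + Hf y 2 * pdPhi Φ 3 (fun z => vf z i) y) x :=
    (dC1.add dC2).add dC3
  have dD : DifferentiableAt ℝ (fun y => Hf y i * divPhi Φ vf y) x := (dHc i).mul ddiv
  rw [pdPhi_add m (((dP 0 i).fun_add dB).fun_sub dC) dD,
    pdPhi_sub m ((dP 0 i).fun_add dB) dC,
    pdPhi_add m (dP 0 i) dB,
    pdPhi_add m (dB1.fun_add dB2) dB3,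
    pdPhi_add m dB1 dB2,
    pdPhi_add m (dC1.fun_add dC2) dC3,
    pdPhi_add m dC1 dC2,
    pdPhi_mul m (dvc 0) (dP 1 i), pdPhi_mul m (dvc 1) (dP 2 i), pdPhi_mul m (dvc 2) (dP 3 i),
    pdPhi_mul m (dHc 0) (dQ 1 i), pdPhi_mul m (dHc 1) (dQ 2 i), pdPhi_mul m (dHc 2) (dQ 3 i),
    pdPhi_mul m (dHc i) ddiv,
    pdPhi_divPhi hΦ hv h1 m,
    show divPhi Φ vf x = pdPhi Φ 1 (fun z => vf z 0) x + pdPhi Φ 2 (fun z => vf z 1) x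
      + pdPhi Φ 3 (fun z => vf z 2) x from rfl]
  ring

end Stmt12Aux

open Stmt12Aux in
/-- If the induction equation
`ℍ(H, v, Φ) = (∂ₜ^Φ + v·∇^Φ)H − (H·∇^Φ)v + H(∇^Φ·v) = 0` of ideal relativistic MHD holds
on an open set `U` (with `Φ, H, v` twice continuously differentiable and `∂₁Φ ≠ 0` on `U`),
then the divergence satisfies the transport equation
`(∂ₜ^Φ + v·∇^Φ)(∇^Φ·H) + (∇^Φ·v)(∇^Φ·H) = 0` on `U`. -/
theorem stmt_12 (U : Set (Fin 4 → ℝ)) (hU : IsOpen U)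
    (Φ : (Fin 4 → ℝ) → ℝ) (H v : (Fin 4 → ℝ) → Fin 3 → ℝ)
    (hΦ : ContDiffOn ℝ 2 Φ U) (hH : ContDiffOn ℝ 2 H U) (hv : ContDiffOn ℝ 2 v U)
    (hΦ1 : ∀ x ∈ U, pd 1 Φ x ≠ 0)
    (heq : ∀ x ∈ U, ∀ i : Fin 3,
      pdPhi Φ 0 (fun y => H y i) x
        + (∑ j : Fin 3, v x j * pdPhi Φ j.succ (fun y => H y i) x)
        - (∑ j : Fin 3, H x j * pdPhi Φ j.succ (fun y => v y i) x)
        + H x i * divPhi Φ v x = 0) :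
    ∀ x ∈ U,
      pdPhi Φ 0 (divPhi Φ H) x
        + (∑ j : Fin 3, v x j * pdPhi Φ j.succ (divPhi Φ H) x)
        + divPhi Φ v x * divPhi Φ H x = 0 := by
  intro x hx
  have hmem := hU.mem_nhds hx
  have hΦx : ContDiffAt ℝ 2 Φ x := hΦ.contDiffAt hmem
  have hHi : ∀ c : Fin 3, ContDiffAt ℝ 2 (fun z => H z c) x :=
    fun c => contDiffAt_pi.mp (hH.contDiffAt hmem) c
  have hvi : ∀ c : Fin 3, ContDiffAt ℝ 2 (fun z => v z c) x :=
    fun c => contDiffAt_pi.mp (hv.contDiffAt hmem) c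
  have h1 : pd 1 Φ x ≠ 0 := hΦ1 x hx
  have s0 : (0 : Fin 3).succ = (1 : Fin 4) := rfl
  have s1 : (1 : Fin 3).succ = (2 : Fin 4) := rfl
  have s2 : (2 : Fin 3).succ = (3 : Fin 4) := rfl
  have key : ∀ (i : Fin 3) (m : Fin 4), pdPhi Φ m (fun y =>
      pdPhi Φ 0 (fun z => H z i) y
        + (v y 0 * pdPhi Φ 1 (fun z => H z i) y + v y 1 * pdPhi Φ 2 (fun z => H z i) y
            + v y 2 * pdPhi Φ 3 (fun z => H z i) y)
        - (H y 0 * pdPhi Φ 1 (fun z => v z i) y + H y 1 * pdPhi Φ 2 (fun z => v z i) y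
            + H y 2 * pdPhi Φ 3 (fun z => v z i) y)
        + H y i * divPhi Φ v y) x = 0 := by
    intro i m
    apply pdPhi_eventually_zero _ m
    filter_upwards [hmem] with y hy
    have h := heq y hy i
    simp only [Fin.sum_univ_three, s0, s1, s2] at h
    simpa using h
  have cH : ∀ (c : Fin 3) (a b : Fin 4),
      pdPhi Φ a (fun y => pdPhi Φ b (fun z => H z c) y) x
        = pdPhi Φ b (fun y => pdPhi Φ a (fun z => H z c) y) x :=
    fun c a b => pdPhi_comm hΦx (hHi c) h1 a b
  have cv : ∀ (c : Fin 3) (a b : Fin 4),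
      pdPhi Φ a (fun y => pdPhi Φ b (fun z => v z c) y) x
        = pdPhi Φ b (fun y => pdPhi Φ a (fun z => v z c) y) x :=
    fun c a b => pdPhi_comm hΦx (hvi c) h1 a b
  have z0 := (master hΦx hHi hvi h1 1 0).symm.trans (key 0 1)
  have z1 := (master hΦx hHi hvi h1 2 1).symm.trans (key 1 2)
  have z2 := (master hΦx hHi hvi h1 3 2).symm.trans (key 2 3)
  rw [cH 0 1 0] at z0
  rw [cH 1 2 0, cH 1 2 1, cv 1 2 1, cv 0 2 1] at z1
  rw [cH 2 3 0, cH 2 3 1, cH 2 3 2, cv 2 3 1, cv 2 3 2, cv 0 3 1, cv 1 3 2] at z2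
  simp only [Fin.sum_univ_three, s0, s1, s2]
  rw [pdPhi_divPhi' hΦx hHi h1 0, pdPhi_divPhi' hΦx hHi h1 1,
    pdPhi_divPhi' hΦx hHi h1 2, pdPhi_divPhi' hΦx hHi h1 3,
    cH 0 2 1, cH 0 3 1, cH 1 3 2,
    show divPhi Φ v x = pdPhi Φ 1 (fun z => v z 0) x + pdPhi Φ 2 (fun z => v z 1) x
      + pdPhi Φ 3 (fun z => v z 2) x from rfl,
    show divPhi Φ H x = pdPhi Φ 1 (fun z => H z 0) x + pdPhi Φ 2 (fun z => H z 1) x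
      + pdPhi Φ 3 (fun z => H z 2) x from rfl]
  linear_combination z0 + z1 + z2
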